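/- Let G = (V,E) be a finite simple graph with |V| = n and let 0 ≤ α ≤ 1/3. Let v₁, v₂, …, vₙ be an enumeration of V with d(v₁) ≤ d(v₂) ≤ … ≤ d(vₙ). For a k-element set C = {v_{i₁}, …, v_{i_k}} with i₁ < … < i_k, identify C with the increasing index sequence (i₁, …, i_k). Suppose C is a k-element subset of V that minimizes cov_α among all k-element subsets, and that C is lexicographically smallest (with respect to these index sequences) among all such minimizers. Let v_j be the element of C of largest index, i.e., j = i_k. Then C is a dominating set of the induced subgraph G[{v₁, …, v_j}]: every vertex v_i with 1 ≤ i ≤ j is in C or has a neighbor in C. -/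

import Mathlib

set_option maxHeartbeats 1000000

open Finset

/-- Number of edges of `G` with both endpoints in `X`. -/
noncomputable def mIn {V : Type*} (G : SimpleGraph V) (X : Finset V) : ℕ :=
  {e ∈ G.edgeSet | ∀ v ∈ e, v ∈ X}.ncard

/-- Number of edges of `G` with one endpoint in `X` and the other in `Y`. -/
noncomputable def mBtw {V : Type*} (G : SimpleGraph V) (X Y : Finset V) : ℕ :=
  {e ∈ G.edgeSet | ∃ u ∈ X, ∃ w ∈ Y, e = s(u, w)}.ncard

/-- `cov_α(S) = (1-α)·m(S) + α·m(S, V∖S)`. -/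
noncomputable def cov {V : Type*} [Fintype V] [DecidableEq V] (G : SimpleGraph V) (α : ℝ)
    (S : Finset V) : ℝ :=
  (1 - α) * mIn G S + α * mBtw G S Sᶜ

section Aux

variable {V : Type*} [Fintype V] [DecidableEq V] (G : SimpleGraph V) [DecidableRel G.Adj]

set_option linter.unusedSectionVars false

lemma mIn_insert {x : V} {S : Finset V} (hx : x ∉ S) :
    mIn G (insert x S) = mIn G S + (G.neighborFinset x ∩ S).card := by
  have hinj : Function.Injective (fun y => s(x, y)) :=
    fun a b h => (Sym2.congr_right).mp h
  have hset : {e ∈ G.edgeSet | ∀ v ∈ e, v ∈ insert x S}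
      = {e ∈ G.edgeSet | ∀ v ∈ e, v ∈ S} ∪ (fun y => s(x, y)) '' ↑(G.neighborFinset x ∩ S) := by
    ext e
    induction e with
    | _ a b =>
      simp only [Set.mem_setOf_eq, Set.mem_union, Set.mem_image, Finset.coe_inter,
        Set.mem_inter_iff, Finset.mem_coe, SimpleGraph.mem_neighborFinset, Sym2.mem_iff,
        Finset.mem_insert, SimpleGraph.mem_edgeSet]
      constructor
      · rintro ⟨hab, hmem⟩
        have ha := hmem a (Or.inl rfl)
        have hb := hmem b (Or.inr rfl)
        have hne : a ≠ b := hab.ne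
        rcases ha with ha | ha
        · subst ha
          right
          refine ⟨b, ⟨hab, ?_⟩, rfl⟩
          rcases hb with hb | hb
          · exact absurd hb.symm hne
          · exact hb
        · rcases hb with hb | hb
          · subst hb
            exact Or.inr ⟨a, ⟨hab.symm, ha⟩, Sym2.eq_swap⟩
          · exact Or.inl ⟨hab, fun v hv => by rcases hv with h | h <;> subst h <;> assumption⟩
      · rintro (⟨hab, hmem⟩ | ⟨y, ⟨hadj, hyS⟩, hey⟩)
        · exact ⟨hab, fun v hv => Or.inr (hmem v hv)⟩
        · rcases Sym2.eq_iff.mp hey with ⟨h1, h2⟩ | ⟨h1, h2⟩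
          · subst h1; subst h2
            refine ⟨hadj, fun v hv => ?_⟩
            rcases hv with h | h
            · exact Or.inl h
            · subst h; exact Or.inr hyS
          · subst h1; subst h2
            refine ⟨hadj.symm, fun v hv => ?_⟩
            rcases hv with h | h
            · subst h; exact Or.inr hyS
            · exact Or.inl h
  unfold mIn
  rw [hset, Set.ncard_union_eq ?_ (Set.toFinite _) (Set.toFinite _),
    Set.ncard_image_of_injective _ hinj, Set.ncard_coe_finset]
  rw [Set.disjoint_left]
  rintro e ⟨_, hmem⟩ ⟨y, _, hey⟩
  have : x ∈ S := hmem x (by rw [← hey]; exact Sym2.mem_mk_left x y)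
  exact hx this

lemma mem_btw_iff (X : Finset V) (a b : V) :
    s(a, b) ∈ {e ∈ G.edgeSet | ∃ u ∈ X, ∃ w ∈ Xᶜ, e = s(u, w)} ↔
      G.Adj a b ∧ ((a ∈ X ∧ b ∉ X) ∨ (b ∈ X ∧ a ∉ X)) := by
  simp only [Set.mem_setOf_eq, SimpleGraph.mem_edgeSet, Finset.mem_compl]
  constructor
  · rintro ⟨h, u, hu, w, hw, he⟩
    refine ⟨h, ?_⟩
    rcases Sym2.eq_iff.mp he with ⟨h1, h2⟩ | ⟨h1, h2⟩
    · exact Or.inl ⟨h1 ▸ hu, h2 ▸ hw⟩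
    · exact Or.inr ⟨h2 ▸ hu, h1 ▸ hw⟩
  · rintro ⟨h, ⟨ha, hb⟩ | ⟨hb, ha⟩⟩
    · exact ⟨h, a, ha, b, hb, rfl⟩
    · exact ⟨h, b, hb, a, ha, Sym2.eq_swap⟩

lemma mem_image_sym2 {x : V} {T : Set V} {a b : V} :
    s(a, b) ∈ (fun y => s(x, y)) '' T ↔ (a = x ∧ b ∈ T) ∨ (b = x ∧ a ∈ T) := by
  constructor
  · rintro ⟨y, hy, he⟩
    rcases Sym2.eq_iff.mp he with ⟨h1, h2⟩ | ⟨h1, h2⟩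
    · exact Or.inl ⟨h1.symm, h2 ▸ hy⟩
    · exact Or.inr ⟨h1.symm, h2 ▸ hy⟩
  · rintro (⟨rfl, hb⟩ | ⟨rfl, ha⟩)
    · exact ⟨b, hb, rfl⟩
    · exact ⟨a, ha, Sym2.eq_swap⟩

lemma mBtw_insert {x : V} {S : Finset V} (hx : x ∉ S) :
    mBtw G (insert x S) (insert x S)ᶜ + 2 * (G.neighborFinset x ∩ S).card
      = mBtw G S Sᶜ + G.degree x := by
  classical
  set BS := {e ∈ G.edgeSet | ∃ u ∈ S, ∃ w ∈ Sᶜ, e = s(u, w)} with hBS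
  set R := (fun y => s(x, y)) '' ↑(G.neighborFinset x ∩ S) with hR
  set Add := (fun y => s(x, y)) '' ↑(G.neighborFinset x \ S) with hAdd
  have hinj : Function.Injective (fun y : V => s(x, y)) :=
    fun a b h => (Sym2.congr_right).mp h
  have hRmem : ∀ a b : V, s(a, b) ∈ R ↔
      (a = x ∧ (G.Adj x b ∧ b ∈ S)) ∨ (b = x ∧ (G.Adj x a ∧ a ∈ S)) := by
    intro a b
    rw [hR, mem_image_sym2]
    simp [SimpleGraph.mem_neighborFinset]
  have hAddmem : ∀ a b : V, s(a, b) ∈ Add ↔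
      (a = x ∧ (G.Adj x b ∧ b ∉ S)) ∨ (b = x ∧ (G.Adj x a ∧ a ∉ S)) := by
    intro a b
    rw [hAdd, mem_image_sym2]
    simp [SimpleGraph.mem_neighborFinset]
  have hset : {e ∈ G.edgeSet | ∃ u ∈ insert x S, ∃ w ∈ (insert x S)ᶜ, e = s(u, w)}
      = (BS \ R) ∪ Add := by
    ext e
    induction e with
    | _ a b =>
      rw [mem_btw_iff, Set.mem_union, Set.mem_diff, hBS, mem_btw_iff, hRmem, hAddmem]
      have hxx : x = x := rfl
      have hc : G.Adj a x ↔ G.Adj x a := G.adj_comm a x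
      have hc' : G.Adj b x ↔ G.Adj x b := G.adj_comm b x
      have hirr : ¬ G.Adj x x := G.irrefl
      by_cases ha : a = x <;> by_cases hb : b = x <;>
        simp only [ha, hb, Finset.mem_insert] at * <;> tauto
  have hRsub : R ⊆ BS := by
    intro e he
    induction e with
    | _ a b =>
      rw [hRmem] at he
      rw [hBS, mem_btw_iff]
      rcases he with ⟨rfl, h, hS⟩ | ⟨rfl, h, hS⟩
      · exact ⟨h, Or.inr ⟨hS, hx⟩⟩
      · exact ⟨h.symm, Or.inl ⟨hS, hx⟩⟩
  have hdisj : Disjoint (BS \ R) Add := by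
    rw [Set.disjoint_left]
    intro e he heA
    induction e with
    | _ a b =>
      rw [hAddmem] at heA
      rw [Set.mem_diff, hBS, mem_btw_iff] at he
      rcases heA with ⟨rfl, h, hS⟩ | ⟨rfl, h, hS⟩
      · rcases he.1.2 with ⟨h1, _⟩ | ⟨h1, _⟩
        · exact hx h1
        · exact hS h1
      · rcases he.1.2 with ⟨h1, _⟩ | ⟨h1, _⟩
        · exact hS h1
        · exact hx h1
  have hcard1 : (BS \ R).ncard + R.ncard = BS.ncard :=
    Set.ncard_diff_add_ncard_of_subset hRsub (Set.toFinite _)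
  have hcardR : R.ncard = (G.neighborFinset x ∩ S).card := by
    rw [hR, Set.ncard_image_of_injective _ hinj, Set.ncard_coe_finset]
  have hcardA : Add.ncard = (G.neighborFinset x \ S).card := by
    rw [hAdd, Set.ncard_image_of_injective _ hinj, Set.ncard_coe_finset]
  have hdeg : (G.neighborFinset x ∩ S).card + (G.neighborFinset x \ S).card = G.degree x :=
    Finset.card_inter_add_card_sdiff _ _
  rw [mBtw, mBtw, hset, ← hBS, Set.ncard_union_eq hdisj (Set.toFinite _) (Set.toFinite _),
    hcardA]
  omega

lemma lex_sort_lt {α : Type*} [LinearOrder α] [DecidableEq α] (j : α) (s : Finset α) :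
    ∀ i, i < j → i ∉ s → (∀ x ∈ s, x < j) →
    List.Lex (· < ·) ((insert i s).sort (· ≤ ·)) ((insert j s).sort (· ≤ ·)) := by
  induction s using Finset.induction_on_min with
  | empty =>
    intro i hij _ _
    simp only [insert_empty_eq, Finset.sort_singleton]
    exact List.Lex.rel hij
  | insert a s ha IH =>
    intro i hij hi hlt
    have haj : a < j := hlt a (mem_insert_self a s)
    have hsj : ∀ x ∈ s, x < j := fun x hx => hlt x (mem_insert_of_mem hx)
    have hia : i ≠ a := fun h => hi (h ▸ mem_insert_self a s)
    have hans : a ∉ s := fun h => absurd rfl (ha a h).ne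
    have hright : (insert j (insert a s)).sort (· ≤ ·) = a :: (insert j s).sort (· ≤ ·) := by
      rw [Finset.insert_comm, Finset.sort_insert]
      · intro b hb
        rcases Finset.mem_insert.mp hb with rfl | hb
        · exact haj.le
        · exact (ha b hb).le
      · simp only [Finset.mem_insert]
        push_neg
        exact ⟨haj.ne, hans⟩
    rcases lt_or_gt_of_ne hia with h | h
    · have hleft : (insert i (insert a s)).sort (· ≤ ·) = i :: (insert a s).sort (· ≤ ·) := by
        rw [Finset.sort_insert]
        · intro b hb
          rcases Finset.mem_insert.mp hb with rfl | hb
          · exact h.le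
          · exact (h.trans (ha b hb)).le
        · exact hi
      rw [hleft, hright]
      exact List.Lex.rel h
    · have hleft : (insert i (insert a s)).sort (· ≤ ·) = a :: (insert i s).sort (· ≤ ·) := by
        rw [Finset.insert_comm, Finset.sort_insert]
        · intro b hb
          rcases Finset.mem_insert.mp hb with rfl | hb
          · exact h.le
          · exact (ha b hb).le
        · simp only [Finset.mem_insert]
          push_neg
          exact ⟨fun hh => hia hh.symm, hans⟩
      rw [hleft, hright]
      exact List.Lex.cons (IH i hij (fun h' => hi (mem_insert_of_mem h')) hsj)

end Aux

theorem stmt17 {V : Type*} [Fintype V] [DecidableEq V] (G : SimpleGraph V)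
    [DecidableRel G.Adj] (α : ℝ) (hα0 : 0 ≤ α) (hα1 : α ≤ 1 / 3)
    (e : Fin (Fintype.card V) ≃ V)
    (hsorted : ∀ i j : Fin (Fintype.card V), i ≤ j → G.degree (e i) ≤ G.degree (e j))
    (k : ℕ) (C : Finset V) (hCcard : C.card = k) (hCne : C.Nonempty)
    (hmin : ∀ C' : Finset V, C'.card = k → cov G α C ≤ cov G α C')
    (hlex : ∀ C' : Finset V, C'.card = k → cov G α C' = cov G α C → C' ≠ C →
      List.Lex (· < ·) ((C.image e.symm).sort (· ≤ ·)) ((C'.image e.symm).sort (· ≤ ·)))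
    (j : Fin (Fintype.card V)) (hj : j = (C.image e.symm).max' (hCne.image e.symm)) :
    ∀ i : Fin (Fintype.card V), i ≤ j → e i ∈ C ∨ ∃ u ∈ C, G.Adj (e i) u := by
  intro i hij
  by_contra hcon
  push_neg at hcon
  obtain ⟨hiC, hnoadj⟩ := hcon
  set u := e i with hu
  set w := e j with hw
  -- w ∈ C
  have hjmem : j ∈ C.image e.symm := hj ▸ Finset.max'_mem _ _
  have hwC : w ∈ C := by
    obtain ⟨c, hc, hec⟩ := Finset.mem_image.mp hjmem
    have : c = w := by rw [hw, ← hec, Equiv.apply_symm_apply]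
    exact this ▸ hc
  have huw : u ≠ w := fun h => hiC (h ▸ hwC)
  have hijne : i ≠ j := fun h => huw (by rw [hu, hw, h])
  have hijlt : i < j := lt_of_le_of_ne hij hijne
  set T := C.erase w with hT
  have hwT : w ∉ T := Finset.notMem_erase _ _
  have huT : u ∉ T := fun h => hiC (Finset.mem_of_mem_erase h)
  have hC : C = insert w T := (Finset.insert_erase hwC).symm
  set C' := insert u T with hC'
  -- cardinality
  have hcard' : C'.card = k := by
    rw [hC', Finset.card_insert_of_notMem huT, hT, Finset.card_erase_of_mem hwC, hCcard]
    have : 1 ≤ k := hCcard ▸ Finset.card_pos.mpr hCne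
    omega
  -- no neighbors of u in T
  have hnb : (G.neighborFinset u ∩ T).card = 0 := by
    rw [Finset.card_eq_zero, Finset.eq_empty_iff_forall_notMem]
    intro y hy
    rw [Finset.mem_inter, SimpleGraph.mem_neighborFinset] at hy
    exact hnoadj y (Finset.mem_of_mem_erase hy.2) hy.1
  -- counting equalities
  have h1 : mIn G C = mIn G T + (G.neighborFinset w ∩ T).card := by
    rw [hC]; exact mIn_insert G hwT
  have h2 : mIn G C' = mIn G T := by
    rw [hC', mIn_insert G huT, hnb, Nat.add_zero]
  have h3 : mBtw G C Cᶜ + 2 * (G.neighborFinset w ∩ T).card = mBtw G T Tᶜ + G.degree w := by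
    rw [hC]; exact mBtw_insert G hwT
  have h4 : mBtw G C' C'ᶜ = mBtw G T Tᶜ + G.degree u := by
    have := mBtw_insert G huT
    rw [hnb] at this
    simpa [hC'] using this
  have hdeg : G.degree u ≤ G.degree w := hsorted i j hij
  -- cov inequality
  have hcov : cov G α C' ≤ cov G α C := by
    unfold cov
    have e1 : (mIn G C : ℝ) = mIn G T + (G.neighborFinset w ∩ T).card := by
      exact_mod_cast congrArg Nat.cast h1
    have e2 : (mIn G C' : ℝ) = mIn G T := by exact_mod_cast congrArg Nat.cast h2
    have e3 : (mBtw G C Cᶜ : ℝ) + 2 * (G.neighborFinset w ∩ T).card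
        = mBtw G T Tᶜ + G.degree w := by exact_mod_cast congrArg Nat.cast h3
    have e4 : (mBtw G C' C'ᶜ : ℝ) = mBtw G T Tᶜ + G.degree u := by
      exact_mod_cast congrArg Nat.cast h4
    have hdegR : (G.degree u : ℝ) ≤ G.degree w := by exact_mod_cast hdeg
    have haR : (0 : ℝ) ≤ (G.neighborFinset w ∩ T).card := Nat.cast_nonneg _
    nlinarith [mul_nonneg hα0 (sub_nonneg.mpr hdegR),
      mul_nonneg (by linarith : (0:ℝ) ≤ 1 - 3 * α) haR]
  have hge : cov G α C ≤ cov G α C' := hmin C' hcard'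
  have hceq : cov G α C' = cov G α C := le_antisymm hcov hge
  have hne : C' ≠ C := fun h => hiC (h ▸ Finset.mem_insert_self u T)
  have hlexCC' := hlex C' hcard' hceq hne
  -- images
  have hAim : C.image e.symm = insert j (T.image e.symm) := by
    rw [hC, Finset.image_insert, hw, Equiv.symm_apply_apply]
  have hBim : C'.image e.symm = insert i (T.image e.symm) := by
    rw [hC', Finset.image_insert, hu, Equiv.symm_apply_apply]
  have hiA : i ∉ T.image e.symm := by
    intro h
    obtain ⟨t, ht, het⟩ := Finset.mem_image.mp h
    have : t = u := by rw [hu, ← het, Equiv.apply_symm_apply]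
    exact hiC (this ▸ Finset.mem_of_mem_erase ht)
  have hxlt : ∀ x ∈ T.image e.symm, x < j := by
    intro x hx
    obtain ⟨t, ht, het⟩ := Finset.mem_image.mp hx
    have hxle : x ≤ j := by
      rw [hj]
      exact Finset.le_max' _ x (Finset.mem_image.mpr ⟨t, Finset.mem_of_mem_erase ht, het⟩)
    refine lt_of_le_of_ne hxle (fun hxj => ?_)
    have : t = w := by rw [hw, ← hxj, ← het, Equiv.apply_symm_apply]
    exact (Finset.ne_of_mem_erase ht) this
  have hmylex : List.Lex (· < ·) ((C'.image e.symm).sort (· ≤ ·))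
      ((C.image e.symm).sort (· ≤ ·)) := by
    rw [hAim, hBim]
    exact lex_sort_lt j (T.image e.symm) i hijlt hiA hxlt
  exact absurd hlexCC' (asymm hmylex)
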